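/- Let X be the one-point compactification ℝ ∪ {∞} of ℝ with the action of ℝ× extended by fixing ∞. Every pointwise limit of a net of multiplication maps (x ↦ cₓ for c ∈ ℝ×) in the product space X^X is either a multiplication map by some c ∈ ℝ×, the map sending every real x to 0 and ∞ to ∞, or the map sending every nonzero x (and ∞) to ∞ and 0 to 0. Hence the enveloping semigroup E(X) has exactly the elements ℝ× ∪ {0-map, ∞-map}. -/

import Mathlib

open OnePoint

/-- Multiplication by `c` on `ℝ`, extended to the one-point compactification
by `∞ ↦ ∞`. -/
def realMulMap (c : ℝ) : OnePoint ℝ → OnePoint ℝ :=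
  OnePoint.map (fun x : ℝ => c * x)

/-- The map sending every real point to `0` and `∞` to `∞`. -/
def realZeroMap : OnePoint ℝ → OnePoint ℝ :=
  OnePoint.map (fun _ : ℝ => (0 : ℝ))

/- The map sending `0` to `0` and every other point (including `∞`) to `∞`. -/
open scoped Classical in
noncomputable def realInftyMap : OnePoint ℝ → OnePoint ℝ :=
  fun x => if x = ((0 : ℝ) : OnePoint ℝ) then ((0 : ℝ) : OnePoint ℝ) else ∞

open Filter Topology Set

lemma realMulMap_coe (c x : ℝ) : realMulMap c (x : OnePoint ℝ) = ((c * x : ℝ) : OnePoint ℝ) :=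
  rfl

lemma realMulMap_infty (c : ℝ) : realMulMap c ∞ = ∞ := rfl

lemma realMulMap_continuous {x : ℝ} (hx : x ≠ 0) : Continuous (realMulMap x) :=
  OnePoint.continuous_map (continuous_mul_left x)
    (Homeomorph.mulLeft₀ x hx).map_coclosedCompact.le

lemma tendsto_realMulMap_cocompact {x : ℝ} (hx : x ≠ 0) {c : ℕ → ℝ}
    (hc : Tendsto c atTop atTop) :
    Tendsto (fun n => ((c n * x : ℝ) : OnePoint ℝ)) atTop (𝓝 (∞ : OnePoint ℝ)) := by
  refine (OnePoint.tendsto_coe_infty).comp ?_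
  rw [Filter.coclosedCompact_eq_cocompact, cocompact_eq_atBot_atTop]
  rcases hx.lt_or_gt with h | h
  · exact (hc.atTop_mul_const_of_neg h).mono_right le_sup_left
  · exact (hc.atTop_mul_const h).mono_right le_sup_right

/-- The enveloping semigroup of the action of `ℝˣ` on the one-point
compactification `ℝ ∪ {∞}` consists exactly of the multiplication maps by
nonzero reals, the `0`-map and the `∞`-map. -/
theorem envelopingSemigroup_onePoint_real :
    closure {f : OnePoint ℝ → OnePoint ℝ | ∃ c : ℝ, c ≠ 0 ∧ f = realMulMap c} =
      {f : OnePoint ℝ → OnePoint ℝ | ∃ c : ℝ, c ≠ 0 ∧ f = realMulMap c} ∪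
        {realZeroMap, realInftyMap} := by
  set S : Set (OnePoint ℝ → OnePoint ℝ) := {f | ∃ c : ℝ, c ≠ 0 ∧ f = realMulMap c} with hS
  apply le_antisymm
  · -- closure S ⊆ S ∪ {zero, infty}
    intro f hf
    have hclosed : ∀ (T : Set (OnePoint ℝ → OnePoint ℝ)), IsClosed T → S ⊆ T → f ∈ T :=
      fun T hT hsub => hT.closure_subset_iff.2 hsub hf
    have hI : f ∞ = ∞ :=
      hclosed {g | g ∞ = ∞} (isClosed_eq (continuous_apply _) continuous_const)
        (by rintro g ⟨c, hc, rfl⟩; rfl)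
    have h0 : f ((0:ℝ) : OnePoint ℝ) = ((0:ℝ) : OnePoint ℝ) :=
      hclosed {g | g ((0:ℝ) : OnePoint ℝ) = ((0:ℝ) : OnePoint ℝ)}
        (isClosed_eq (continuous_apply _) continuous_const)
        (by rintro g ⟨c, hc, rfl⟩; simp [realMulMap_coe])
    have hx : ∀ x : ℝ, x ≠ 0 →
        f ((x:ℝ) : OnePoint ℝ) = realMulMap x (f ((1:ℝ) : OnePoint ℝ)) := by
      intro x hx0
      refine hclosed {g | g ((x:ℝ) : OnePoint ℝ) = realMulMap x (g ((1:ℝ) : OnePoint ℝ))}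
        (isClosed_eq (continuous_apply _)
          ((realMulMap_continuous hx0).comp (continuous_apply _))) ?_
      rintro g ⟨c, hc, rfl⟩
      show realMulMap c ((x:ℝ) : OnePoint ℝ) = realMulMap x (realMulMap c ((1:ℝ) : OnePoint ℝ))
      rw [realMulMap_coe, realMulMap_coe, realMulMap_coe, mul_one, mul_comm]
    cases h1 : f ((1:ℝ) : OnePoint ℝ) with
    | infty =>
      -- f 1 = ∞, so f = realInftyMap
      right; right
      funext p
      cases p with
      | infty =>
        simp only [realInftyMap]
        rw [if_neg (OnePoint.infty_ne_coe _)]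
        exact hI
      | coe x =>
        rcases eq_or_ne x 0 with rfl | hx0
        · simpa [realInftyMap] using h0
        · have := hx x hx0
          rw [h1] at this
          simp only [realInftyMap, OnePoint.coe_eq_coe, if_neg hx0]
          exact this
    | coe a =>
      rcases eq_or_ne a 0 with rfl | ha
      · -- f 1 = 0, so f = realZeroMap
        right; left
        funext p
        cases p with
        | infty => exact hI
        | coe x =>
          rcases eq_or_ne x 0 with rfl | hx0
          · exact h0
          · have := hx x hx0
            rw [h1, realMulMap_coe, mul_zero] at this
            exact this
      · -- f 1 = a ≠ 0, so f = realMulMap a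
        left
        refine ⟨a, ha, ?_⟩
        funext p
        cases p with
        | infty => exact hI
        | coe x =>
          rcases eq_or_ne x 0 with rfl | hx0
          · rw [realMulMap_coe, mul_zero]; exact h0
          · have := hx x hx0
            rw [h1, realMulMap_coe] at this
            rw [realMulMap_coe, mul_comm]
            exact this
  · rintro f (hf | hf)
    · exact subset_closure hf
    · rcases hf with rfl | rfl
      · -- realZeroMap is a limit of realMulMap (1/(n+1))
        refine mem_closure_of_tendsto (f := fun n : ℕ => realMulMap (1 / (n + 1 : ℝ)))
          (b := atTop) ?_ ?_
        · rw [tendsto_pi_nhds]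
          intro p
          cases p with
          | infty => exact tendsto_const_nhds.congr (fun n => rfl)
          | coe x =>
            have h1 : Tendsto (fun n : ℕ => (1 / (n + 1 : ℝ)) * x) atTop (𝓝 0) := by
              simpa using tendsto_one_div_add_atTop_nhds_zero_nat.mul_const x
            have : Tendsto (fun n : ℕ => (((1 / (n + 1 : ℝ)) * x : ℝ) : OnePoint ℝ)) atTop
                (𝓝 (((0:ℝ) : OnePoint ℝ))) := (OnePoint.continuous_coe.tendsto 0).comp h1
            simpa [realMulMap_coe, realZeroMap] using this
        · filter_upwards with n
          exact ⟨1 / (n + 1 : ℝ), by positivity, rfl⟩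
      · -- realInftyMap is a limit of realMulMap (n+1)
        refine mem_closure_of_tendsto (f := fun n : ℕ => realMulMap ((n : ℝ) + 1))
          (b := atTop) ?_ ?_
        · rw [tendsto_pi_nhds]
          intro p
          cases p with
          | infty =>
            have : realInftyMap ∞ = ∞ := by
              simp [realInftyMap, OnePoint.infty_ne_coe]
            rw [this]
            exact tendsto_const_nhds.congr (fun n => rfl)
          | coe x =>
            rcases eq_or_ne x 0 with rfl | hx0
            · have : realInftyMap ((0:ℝ) : OnePoint ℝ) = ((0:ℝ) : OnePoint ℝ) := by
                simp [realInftyMap]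
              rw [this]
              exact tendsto_const_nhds.congr (fun n => by simp [realMulMap_coe])
            · have hinf : realInftyMap ((x:ℝ) : OnePoint ℝ) = ∞ := by
                simp [realInftyMap, hx0]
              rw [hinf]
              have hc : Tendsto (fun n : ℕ => (n : ℝ) + 1) atTop atTop :=
                tendsto_atTop_add_const_right _ 1 tendsto_natCast_atTop_atTop
              simpa [realMulMap_coe] using tendsto_realMulMap_cocompact hx0 hc
        · filter_upwards with n
          exact ⟨(n : ℝ) + 1, by positivity, rfl⟩
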